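/- Let l be a nonempty list of natural numbers each of which is at least 3, and suppose that ∑_{p ∈ l} (1/2 − 1/p) = 1 (as rational numbers). Then, up to cyclic rotation and reversal, l equals one of the following 21 lists: (3,3,3,4,4), (3,3,3,3,3,3), (3,4,4,6), (3,3,6,6), (3,3,3,3,6), (3,3,4,3,4), (3,6,3,6), (4,4,4,4), (3,4,6,4), (3,3,4,12), (4,8,8), (3,12,12), (6,6,6), (5,5,10), (3,8,24), (3,9,18), (3,10,15), (4,5,20), (3,7,42), (4,6,12), (3,4,3,12); that is, there exists a list l' in this collection such that l is a rotation of l' or a rotation of the reverse of l'. Conversely, every list in this collection satisfies ∑_{p ∈ l} (1/2 − 1/p) = 1. -/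

import Mathlib

/-- The 21 cyclic face-sequences of combinatorial curvature 0, as lists. -/
def curvatureZeroFaceSequences : List (List ℕ) :=
  [[3, 3, 3, 4, 4], [3, 3, 3, 3, 3, 3], [3, 4, 4, 6], [3, 3, 6, 6],
   [3, 3, 3, 3, 6], [3, 3, 4, 3, 4], [3, 6, 3, 6], [4, 4, 4, 4],
   [3, 4, 6, 4], [3, 3, 4, 12], [4, 8, 8], [3, 12, 12], [6, 6, 6],
   [5, 5, 10], [3, 8, 24], [3, 9, 18], [3, 10, 15], [4, 5, 20],
   [3, 7, 42], [4, 6, 12], [3, 4, 3, 12]]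

lemma qpos {p : ℕ} (hp : 3 ≤ p) : 0 < (p:ℚ) := by exact_mod_cast Nat.lt_of_lt_of_le (by norm_num) hp

lemma inv_le_third {p : ℕ} (hp : 3 ≤ p) : (1:ℚ)/p ≤ 1/3 :=
  one_div_le_one_div_of_le (by norm_num) (by exact_mod_cast hp)

lemma inv_pos3 {p : ℕ} (hp : 3 ≤ p) : 0 < (1:ℚ)/p := by
  have := qpos hp; positivity

lemma inv_le_q {p : ℕ} {q : ℚ} (hq : 0 < q) (h : q ≤ (p:ℚ)) : (1:ℚ)/p ≤ 1/q :=
  one_div_le_one_div_of_le hq h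

lemma nat_le_of_inv {p : ℕ} {q : ℚ} (hp : 3 ≤ p) (hq : 0 < q) (h : 1/q ≤ 1/(p:ℚ)) : (p:ℚ) ≤ q :=
  (one_div_le_one_div hq (qpos hp)).mp h

set_option maxHeartbeats 1000000 in
lemma core3 {a b c : ℕ} (ha : 3 ≤ a) (hab : a ≤ b) (hbc : b ≤ c)
    (hq : (1:ℚ)/a + 1/b + 1/c = 1/2) :
    [a,b,c] ∈ ([[3,7,42],[3,8,24],[3,9,18],[3,10,15],[3,12,12],[4,5,20],[4,6,12],[4,8,8],[5,5,10],[6,6,6]] : List (List ℕ)) := by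
  have hb : 3 ≤ b := le_trans ha hab
  have hc : 3 ≤ c := le_trans hb hbc
  have hia : (1:ℚ)/b ≤ 1/a := inv_le_q (qpos ha) (by exact_mod_cast hab)
  have hib : (1:ℚ)/c ≤ 1/b := inv_le_q (qpos hb) (by exact_mod_cast hbc)
  have ha6 : a ≤ 6 := by
    have h2 : (a:ℚ) ≤ 6 := nat_le_of_inv ha (by norm_num) (by linarith)
    exact_mod_cast h2
  have hb12 : b ≤ 12 := by
    have h3 := inv_le_third ha
    have h2 : (b:ℚ) ≤ 12 := nat_le_of_inv hb (by norm_num) (by linarith)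
    exact_mod_cast h2
  have ha0 : (a:ℚ) ≠ 0 := ne_of_gt (qpos ha)
  have hb0 : (b:ℚ) ≠ 0 := ne_of_gt (qpos hb)
  have hc0 : (c:ℚ) ≠ 0 := ne_of_gt (qpos hc)
  have hnat : 2*(b*c+a*c+a*b) = a*b*c := by
    field_simp at hq
    exact_mod_cast (show 2*((b:ℚ)*c+(a:ℚ)*c+(a:ℚ)*b) = (a:ℚ)*b*c by linear_combination hq)
  have hc144 : c ≤ 144 := by
    have h1 : 2*a+2*b+1 ≤ a*b := by
      by_contra hcon
      push_neg at hcon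
      have h2 : a*b*c ≤ (2*a+2*b)*c := Nat.mul_le_mul_right c (by omega)
      nlinarith
    have h2 : c ≤ 2*a*b := by nlinarith [Nat.mul_le_mul_right c h1]
    calc c ≤ 2*a*b := h2
      _ ≤ 2*6*12 := by
        have := Nat.mul_le_mul (Nat.mul_le_mul (le_refl 2) ha6) hb12
        simpa using this
      _ = 144 := by norm_num
  clear hia hib ha0 hb0 hc0 hq
  have henc : a*1000000+b*1000+c = 3007042 ∨ a*1000000+b*1000+c = 3008024 ∨ a*1000000+b*1000+c = 3009018 ∨ a*1000000+b*1000+c = 3010015 ∨ a*1000000+b*1000+c = 3012012 ∨ a*1000000+b*1000+c = 4005020 ∨ a*1000000+b*1000+c = 4006012 ∨ a*1000000+b*1000+c = 4008008 ∨ a*1000000+b*1000+c = 5005010 ∨ a*1000000+b*1000+c = 6006006 := by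
    interval_cases a <;> interval_cases b <;> omega
  rcases henc with h|h|h|h|h|h|h|h|h|h
  · obtain ⟨rfl, rfl, rfl⟩ : a = 3 ∧ b = 7 ∧ c = 42 := by omega
    decide
  · obtain ⟨rfl, rfl, rfl⟩ : a = 3 ∧ b = 8 ∧ c = 24 := by omega
    decide
  · obtain ⟨rfl, rfl, rfl⟩ : a = 3 ∧ b = 9 ∧ c = 18 := by omega
    decide
  · obtain ⟨rfl, rfl, rfl⟩ : a = 3 ∧ b = 10 ∧ c = 15 := by omega
    decide
  · obtain ⟨rfl, rfl, rfl⟩ : a = 3 ∧ b = 12 ∧ c = 12 := by omega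
    decide
  · obtain ⟨rfl, rfl, rfl⟩ : a = 4 ∧ b = 5 ∧ c = 20 := by omega
    decide
  · obtain ⟨rfl, rfl, rfl⟩ : a = 4 ∧ b = 6 ∧ c = 12 := by omega
    decide
  · obtain ⟨rfl, rfl, rfl⟩ : a = 4 ∧ b = 8 ∧ c = 8 := by omega
    decide
  · obtain ⟨rfl, rfl, rfl⟩ : a = 5 ∧ b = 5 ∧ c = 10 := by omega
    decide
  · obtain ⟨rfl, rfl, rfl⟩ : a = 6 ∧ b = 6 ∧ c = 6 := by omega
    decide

lemma core3Any {a b c : ℕ} (ha : 3 ≤ a) (hb : 3 ≤ b) (hc : 3 ≤ c)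
    (hq : (1:ℚ)/a + 1/b + 1/c = 1/2) :
    ∃ l' ∈ curvatureZeroFaceSequences, [a,b,c] ~r l' ∨ [a,b,c] ~r l'.reverse := by
  have hsub : ∀ t ∈ ([[3,7,42],[3,8,24],[3,9,18],[3,10,15],[3,12,12],[4,5,20],[4,6,12],[4,8,8],[5,5,10],[6,6,6]] : List (List ℕ)), t ∈ curvatureZeroFaceSequences := by decide
  rcases le_total a b with h1 | h1
  · rcases le_total b c with h2 | h2
    · exact ⟨_, hsub _ (core3 ha h1 h2 hq), Or.inl (List.IsRotated.refl _)⟩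
    · rcases le_total a c with h3 | h3
      · exact ⟨_, hsub _ (core3 ha h3 h2 (by linarith)), Or.inr ⟨1, rfl⟩⟩
      · exact ⟨_, hsub _ (core3 hc h3 h1 (by linarith)), Or.inl ⟨2, rfl⟩⟩
  · rcases le_total a c with h2 | h2
    · exact ⟨_, hsub _ (core3 hb h1 h2 (by linarith)), Or.inr ⟨2, rfl⟩⟩
    · rcases le_total b c with h3 | h3
      · exact ⟨_, hsub _ (core3 hb h3 h2 (by linarith)), Or.inl ⟨1, rfl⟩⟩
      · exact ⟨_, hsub _ (core3 hc h3 h1 (by linarith)), Or.inr ⟨0, rfl⟩⟩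

lemma bound4 {p q r s : ℕ} (hp : 3 ≤ p) (hq3 : 3 ≤ q) (hr : 3 ≤ r) (hs : 3 ≤ s)
    (h : (1:ℚ)/p + 1/q + 1/r + 1/s = 1) : p ≤ 12 := by
  by_contra hc
  push_neg at hc
  have hp' : (13:ℕ) ≤ p := hc
  have hp13 : (1:ℚ)/p ≤ 1/13 := inv_le_q (by norm_num) (by exact_mod_cast hp')
  have h3q := inv_le_third hq3
  have h3r := inv_le_third hr
  have h3s := inv_le_third hs
  have hq4 : (1:ℚ)/q = 1/3 := by
    rcases Nat.lt_or_ge q 4 with h4 | h4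
    · have : q = 3 := by omega
      rw [this]; norm_num
    · have : (1:ℚ)/q ≤ 1/4 := inv_le_q (by norm_num) (by exact_mod_cast h4)
      linarith
  have hr4 : (1:ℚ)/r = 1/3 := by
    rcases Nat.lt_or_ge r 4 with h4 | h4
    · have : r = 3 := by omega
      rw [this]; norm_num
    · have : (1:ℚ)/r ≤ 1/4 := inv_le_q (by norm_num) (by exact_mod_cast h4)
      linarith
  have hs4 : (1:ℚ)/s = 1/3 := by
    rcases Nat.lt_or_ge s 4 with h4 | h4
    · have : s = 3 := by omega
      rw [this]; norm_num
    · have : (1:ℚ)/s ≤ 1/4 := inv_le_q (by norm_num) (by exact_mod_cast h4)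
      linarith
  have hpp := inv_pos3 hp
  linarith

set_option maxHeartbeats 4000000 in
lemma core4 {w x y z : ℕ} (hw : 3 ≤ w) (hx : 3 ≤ x) (hy : 3 ≤ y) (hz : 3 ≤ z)
    (hq : (1:ℚ)/w + 1/x + 1/y + 1/z = 1) :
    ∃ l' ∈ curvatureZeroFaceSequences, [w,x,y,z] ~r l' ∨ [w,x,y,z] ~r l'.reverse := by
  have hw12 : w ≤ 12 := bound4 hw hx hy hz hq
  have hx12 : x ≤ 12 := bound4 hx hw hy hz (by linarith)
  have hy12 : y ≤ 12 := bound4 hy hw hx hz (by linarith)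
  have hz12 : z ≤ 12 := bound4 hz hw hx hy (by linarith)
  have hw0 : (w:ℚ) ≠ 0 := ne_of_gt (qpos hw)
  have hx0 : (x:ℚ) ≠ 0 := ne_of_gt (qpos hx)
  have hy0 : (y:ℚ) ≠ 0 := ne_of_gt (qpos hy)
  have hz0 : (z:ℚ) ≠ 0 := ne_of_gt (qpos hz)
  have hnat : x*y*z + w*y*z + w*x*z + w*x*y = w*x*y*z := by
    field_simp at hq
    exact_mod_cast (show (x:ℚ)*y*z + (w:ℚ)*y*z + (w:ℚ)*x*z + (w:ℚ)*x*y = (w:ℚ)*x*y*z by linear_combination hq)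
  clear hq hw0 hx0 hy0 hz0
  have henc : w*1000000+x*10000+y*100+z = 3030412 ∨ w*1000000+x*10000+y*100+z = 3030606 ∨ w*1000000+x*10000+y*100+z = 3031204 ∨ w*1000000+x*10000+y*100+z = 3040312 ∨ w*1000000+x*10000+y*100+z = 3040406 ∨ w*1000000+x*10000+y*100+z = 3040604 ∨ w*1000000+x*10000+y*100+z = 3041203 ∨ w*1000000+x*10000+y*100+z = 3060306 ∨ w*1000000+x*10000+y*100+z = 3060404 ∨ w*1000000+x*10000+y*100+z = 3060603 ∨ w*1000000+x*10000+y*100+z = 3120304 ∨ w*1000000+x*10000+y*100+z = 3120403 ∨ w*1000000+x*10000+y*100+z = 4030312 ∨ w*1000000+x*10000+y*100+z = 4030406 ∨ w*1000000+x*10000+y*100+z = 4030604 ∨ w*1000000+x*10000+y*100+z = 4031203 ∨ w*1000000+x*10000+y*100+z = 4040306 ∨ w*1000000+x*10000+y*100+z = 4040404 ∨ w*1000000+x*10000+y*100+z = 4040603 ∨ w*1000000+x*10000+y*100+z = 4060304 ∨ w*1000000+x*10000+y*100+z = 4060403 ∨ w*1000000+x*10000+y*100+z = 4120303 ∨ w*1000000+x*10000+y*100+z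 = 6030306 ∨ w*1000000+x*10000+y*100+z = 6030404 ∨ w*1000000+x*10000+y*100+z = 6030603 ∨ w*1000000+x*10000+y*100+z = 6040304 ∨ w*1000000+x*10000+y*100+z = 6040403 ∨ w*1000000+x*10000+y*100+z = 6060303 ∨ w*1000000+x*10000+y*100+z = 12030304 ∨ w*1000000+x*10000+y*100+z = 12030403 ∨ w*1000000+x*10000+y*100+z = 12040303 := by
    interval_cases w <;> interval_cases x <;> interval_cases y <;> omega
  rcases henc with h|h|h|h|h|h|h|h|h|h|h|h|h|h|h|h|h|h|h|h|h|h|h|h|h|h|h|h|h|h|h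
  · obtain ⟨rfl, rfl, rfl, rfl⟩ : w = 3 ∧ x = 3 ∧ y = 4 ∧ z = 12 := by omega
    exact ⟨[3, 3, 4, 12], by decide, Or.inl (by decide)⟩
  · obtain ⟨rfl, rfl, rfl, rfl⟩ : w = 3 ∧ x = 3 ∧ y = 6 ∧ z = 6 := by omega
    exact ⟨[3, 3, 6, 6], by decide, Or.inl (by decide)⟩
  · obtain ⟨rfl, rfl, rfl, rfl⟩ : w = 3 ∧ x = 3 ∧ y = 12 ∧ z = 4 := by omega
    exact ⟨[3, 3, 4, 12], by decide, Or.inr (by decide)⟩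
  · obtain ⟨rfl, rfl, rfl, rfl⟩ : w = 3 ∧ x = 4 ∧ y = 3 ∧ z = 12 := by omega
    exact ⟨[3, 4, 3, 12], by decide, Or.inl (by decide)⟩
  · obtain ⟨rfl, rfl, rfl, rfl⟩ : w = 3 ∧ x = 4 ∧ y = 4 ∧ z = 6 := by omega
    exact ⟨[3, 4, 4, 6], by decide, Or.inl (by decide)⟩
  · obtain ⟨rfl, rfl, rfl, rfl⟩ : w = 3 ∧ x = 4 ∧ y = 6 ∧ z = 4 := by omega
    exact ⟨[3, 4, 6, 4], by decide, Or.inl (by decide)⟩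
  · obtain ⟨rfl, rfl, rfl, rfl⟩ : w = 3 ∧ x = 4 ∧ y = 12 ∧ z = 3 := by omega
    exact ⟨[3, 3, 4, 12], by decide, Or.inl (by decide)⟩
  · obtain ⟨rfl, rfl, rfl, rfl⟩ : w = 3 ∧ x = 6 ∧ y = 3 ∧ z = 6 := by omega
    exact ⟨[3, 6, 3, 6], by decide, Or.inl (by decide)⟩
  · obtain ⟨rfl, rfl, rfl, rfl⟩ : w = 3 ∧ x = 6 ∧ y = 4 ∧ z = 4 := by omega
    exact ⟨[3, 4, 4, 6], by decide, Or.inr (by decide)⟩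
  · obtain ⟨rfl, rfl, rfl, rfl⟩ : w = 3 ∧ x = 6 ∧ y = 6 ∧ z = 3 := by omega
    exact ⟨[3, 3, 6, 6], by decide, Or.inl (by decide)⟩
  · obtain ⟨rfl, rfl, rfl, rfl⟩ : w = 3 ∧ x = 12 ∧ y = 3 ∧ z = 4 := by omega
    exact ⟨[3, 4, 3, 12], by decide, Or.inl (by decide)⟩
  · obtain ⟨rfl, rfl, rfl, rfl⟩ : w = 3 ∧ x = 12 ∧ y = 4 ∧ z = 3 := by omega
    exact ⟨[3, 3, 4, 12], by decide, Or.inr (by decide)⟩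
  · obtain ⟨rfl, rfl, rfl, rfl⟩ : w = 4 ∧ x = 3 ∧ y = 3 ∧ z = 12 := by omega
    exact ⟨[3, 3, 4, 12], by decide, Or.inr (by decide)⟩
  · obtain ⟨rfl, rfl, rfl, rfl⟩ : w = 4 ∧ x = 3 ∧ y = 4 ∧ z = 6 := by omega
    exact ⟨[3, 4, 6, 4], by decide, Or.inl (by decide)⟩
  · obtain ⟨rfl, rfl, rfl, rfl⟩ : w = 4 ∧ x = 3 ∧ y = 6 ∧ z = 4 := by omega
    exact ⟨[3, 4, 4, 6], by decide, Or.inr (by decide)⟩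
  · obtain ⟨rfl, rfl, rfl, rfl⟩ : w = 4 ∧ x = 3 ∧ y = 12 ∧ z = 3 := by omega
    exact ⟨[3, 4, 3, 12], by decide, Or.inl (by decide)⟩
  · obtain ⟨rfl, rfl, rfl, rfl⟩ : w = 4 ∧ x = 4 ∧ y = 3 ∧ z = 6 := by omega
    exact ⟨[3, 4, 4, 6], by decide, Or.inr (by decide)⟩
  · obtain ⟨rfl, rfl, rfl, rfl⟩ : w = 4 ∧ x = 4 ∧ y = 4 ∧ z = 4 := by omega
    exact ⟨[4, 4, 4, 4], by decide, Or.inl (by decide)⟩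
  · obtain ⟨rfl, rfl, rfl, rfl⟩ : w = 4 ∧ x = 4 ∧ y = 6 ∧ z = 3 := by omega
    exact ⟨[3, 4, 4, 6], by decide, Or.inl (by decide)⟩
  · obtain ⟨rfl, rfl, rfl, rfl⟩ : w = 4 ∧ x = 6 ∧ y = 3 ∧ z = 4 := by omega
    exact ⟨[3, 4, 4, 6], by decide, Or.inl (by decide)⟩
  · obtain ⟨rfl, rfl, rfl, rfl⟩ : w = 4 ∧ x = 6 ∧ y = 4 ∧ z = 3 := by omega
    exact ⟨[3, 4, 6, 4], by decide, Or.inl (by decide)⟩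
  · obtain ⟨rfl, rfl, rfl, rfl⟩ : w = 4 ∧ x = 12 ∧ y = 3 ∧ z = 3 := by omega
    exact ⟨[3, 3, 4, 12], by decide, Or.inl (by decide)⟩
  · obtain ⟨rfl, rfl, rfl, rfl⟩ : w = 6 ∧ x = 3 ∧ y = 3 ∧ z = 6 := by omega
    exact ⟨[3, 3, 6, 6], by decide, Or.inl (by decide)⟩
  · obtain ⟨rfl, rfl, rfl, rfl⟩ : w = 6 ∧ x = 3 ∧ y = 4 ∧ z = 4 := by omega
    exact ⟨[3, 4, 4, 6], by decide, Or.inl (by decide)⟩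
  · obtain ⟨rfl, rfl, rfl, rfl⟩ : w = 6 ∧ x = 3 ∧ y = 6 ∧ z = 3 := by omega
    exact ⟨[3, 6, 3, 6], by decide, Or.inl (by decide)⟩
  · obtain ⟨rfl, rfl, rfl, rfl⟩ : w = 6 ∧ x = 4 ∧ y = 3 ∧ z = 4 := by omega
    exact ⟨[3, 4, 6, 4], by decide, Or.inl (by decide)⟩
  · obtain ⟨rfl, rfl, rfl, rfl⟩ : w = 6 ∧ x = 4 ∧ y = 4 ∧ z = 3 := by omega
    exact ⟨[3, 4, 4, 6], by decide, Or.inr (by decide)⟩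
  · obtain ⟨rfl, rfl, rfl, rfl⟩ : w = 6 ∧ x = 6 ∧ y = 3 ∧ z = 3 := by omega
    exact ⟨[3, 3, 6, 6], by decide, Or.inl (by decide)⟩
  · obtain ⟨rfl, rfl, rfl, rfl⟩ : w = 12 ∧ x = 3 ∧ y = 3 ∧ z = 4 := by omega
    exact ⟨[3, 3, 4, 12], by decide, Or.inl (by decide)⟩
  · obtain ⟨rfl, rfl, rfl, rfl⟩ : w = 12 ∧ x = 3 ∧ y = 4 ∧ z = 3 := by omega
    exact ⟨[3, 4, 3, 12], by decide, Or.inl (by decide)⟩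
  · obtain ⟨rfl, rfl, rfl, rfl⟩ : w = 12 ∧ x = 4 ∧ y = 3 ∧ z = 3 := by omega
    exact ⟨[3, 3, 4, 12], by decide, Or.inr (by decide)⟩

lemma bound5 {p q r s t : ℕ} (hp : 3 ≤ p) (hq3 : 3 ≤ q) (hr : 3 ≤ r) (hs : 3 ≤ s) (ht : 3 ≤ t)
    (h : (1:ℚ)/p + 1/q + 1/r + 1/s + 1/t = 3/2) : p ≤ 6 := by
  by_contra hc
  push_neg at hc
  have hp' : (7:ℕ) ≤ p := hc
  have hp7 : (1:ℚ)/p ≤ 1/7 := inv_le_q (by norm_num) (by exact_mod_cast hp')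
  have h3q := inv_le_third hq3
  have h3r := inv_le_third hr
  have h3s := inv_le_third hs
  have h3t := inv_le_third ht
  linarith

set_option maxHeartbeats 4000000 in
lemma core5 {v w x y z : ℕ} (hv : 3 ≤ v) (hw : 3 ≤ w) (hx : 3 ≤ x) (hy : 3 ≤ y) (hz : 3 ≤ z)
    (hq : (1:ℚ)/v + 1/w + 1/x + 1/y + 1/z = 3/2) :
    ∃ l' ∈ curvatureZeroFaceSequences, [v,w,x,y,z] ~r l' ∨ [v,w,x,y,z] ~r l'.reverse := by
  have hv6 : v ≤ 6 := bound5 hv hw hx hy hz hq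
  have hw6 : w ≤ 6 := bound5 hw hv hx hy hz (by linarith)
  have hx6 : x ≤ 6 := bound5 hx hv hw hy hz (by linarith)
  have hy6 : y ≤ 6 := bound5 hy hv hw hx hz (by linarith)
  have hz6 : z ≤ 6 := bound5 hz hv hw hx hy (by linarith)
  have hv0 : (v:ℚ) ≠ 0 := ne_of_gt (qpos hv)
  have hw0 : (w:ℚ) ≠ 0 := ne_of_gt (qpos hw)
  have hx0 : (x:ℚ) ≠ 0 := ne_of_gt (qpos hx)
  have hy0 : (y:ℚ) ≠ 0 := ne_of_gt (qpos hy)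
  have hz0 : (z:ℚ) ≠ 0 := ne_of_gt (qpos hz)
  have hnat : 2*(w*x*y*z + v*x*y*z + v*w*y*z + v*w*x*z + v*w*x*y) = 3*(v*w*x*y*z) := by
    field_simp at hq
    exact_mod_cast (show 2*((w:ℚ)*x*y*z + (v:ℚ)*x*y*z + (v:ℚ)*w*y*z + (v:ℚ)*w*x*z + (v:ℚ)*w*x*y) = 3*((v:ℚ)*w*x*y*z) by linear_combination hq)
  clear hq hv0 hw0 hx0 hy0 hz0
  have henc : v*100000000+w*1000000+x*10000+y*100+z = 303030306 ∨ v*100000000+w*1000000+x*10000+y*100+z = 303030404 ∨ v*100000000+w*1000000+x*10000+y*100+z = 303030603 ∨ v*100000000+w*1000000+x*10000+y*100+z = 303040304 ∨ v*100000000+w*1000000+x*10000+y*100+z = 303040403 ∨ v*100000000+w*1000000+x*10000+y*100+z = 303060303 ∨ v*100000000+w*1000000+x*10000+y*100+z = 304030304 ∨ v*100000000+w*1000000+x*10000+y*100+z = 304030403 ∨ v*100000000+w*1000000+x*10000+y*100+z = 304040303 ∨ v*100000000+w*1000000+x*10000+y*100+z = 306030303 ∨ v*100000000+w*1000000+x*10000+y*100+z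 = 403030304 ∨ v*100000000+w*1000000+x*10000+y*100+z = 403030403 ∨ v*100000000+w*1000000+x*10000+y*100+z = 403040303 ∨ v*100000000+w*1000000+x*10000+y*100+z = 404030303 ∨ v*100000000+w*1000000+x*10000+y*100+z = 603030303 := by
    interval_cases v <;> interval_cases w <;> interval_cases x <;> interval_cases y <;> omega
  rcases henc with h|h|h|h|h|h|h|h|h|h|h|h|h|h|h
  · obtain ⟨rfl, rfl, rfl, rfl, rfl⟩ : v = 3 ∧ w = 3 ∧ x = 3 ∧ y = 3 ∧ z = 6 := by omega
    exact ⟨[3, 3, 3, 3, 6], by decide, Or.inl (by decide)⟩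
  · obtain ⟨rfl, rfl, rfl, rfl, rfl⟩ : v = 3 ∧ w = 3 ∧ x = 3 ∧ y = 4 ∧ z = 4 := by omega
    exact ⟨[3, 3, 3, 4, 4], by decide, Or.inl (by decide)⟩
  · obtain ⟨rfl, rfl, rfl, rfl, rfl⟩ : v = 3 ∧ w = 3 ∧ x = 3 ∧ y = 6 ∧ z = 3 := by omega
    exact ⟨[3, 3, 3, 3, 6], by decide, Or.inl (by decide)⟩
  · obtain ⟨rfl, rfl, rfl, rfl, rfl⟩ : v = 3 ∧ w = 3 ∧ x = 4 ∧ y = 3 ∧ z = 4 := by omega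
    exact ⟨[3, 3, 4, 3, 4], by decide, Or.inl (by decide)⟩
  · obtain ⟨rfl, rfl, rfl, rfl, rfl⟩ : v = 3 ∧ w = 3 ∧ x = 4 ∧ y = 4 ∧ z = 3 := by omega
    exact ⟨[3, 3, 3, 4, 4], by decide, Or.inl (by decide)⟩
  · obtain ⟨rfl, rfl, rfl, rfl, rfl⟩ : v = 3 ∧ w = 3 ∧ x = 6 ∧ y = 3 ∧ z = 3 := by omega
    exact ⟨[3, 3, 3, 3, 6], by decide, Or.inl (by decide)⟩
  · obtain ⟨rfl, rfl, rfl, rfl, rfl⟩ : v = 3 ∧ w = 4 ∧ x = 3 ∧ y = 3 ∧ z = 4 := by omega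
    exact ⟨[3, 3, 4, 3, 4], by decide, Or.inl (by decide)⟩
  · obtain ⟨rfl, rfl, rfl, rfl, rfl⟩ : v = 3 ∧ w = 4 ∧ x = 3 ∧ y = 4 ∧ z = 3 := by omega
    exact ⟨[3, 3, 4, 3, 4], by decide, Or.inl (by decide)⟩
  · obtain ⟨rfl, rfl, rfl, rfl, rfl⟩ : v = 3 ∧ w = 4 ∧ x = 4 ∧ y = 3 ∧ z = 3 := by omega
    exact ⟨[3, 3, 3, 4, 4], by decide, Or.inl (by decide)⟩
  · obtain ⟨rfl, rfl, rfl, rfl, rfl⟩ : v = 3 ∧ w = 6 ∧ x = 3 ∧ y = 3 ∧ z = 3 := by omega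
    exact ⟨[3, 3, 3, 3, 6], by decide, Or.inl (by decide)⟩
  · obtain ⟨rfl, rfl, rfl, rfl, rfl⟩ : v = 4 ∧ w = 3 ∧ x = 3 ∧ y = 3 ∧ z = 4 := by omega
    exact ⟨[3, 3, 3, 4, 4], by decide, Or.inl (by decide)⟩
  · obtain ⟨rfl, rfl, rfl, rfl, rfl⟩ : v = 4 ∧ w = 3 ∧ x = 3 ∧ y = 4 ∧ z = 3 := by omega
    exact ⟨[3, 3, 4, 3, 4], by decide, Or.inl (by decide)⟩
  · obtain ⟨rfl, rfl, rfl, rfl, rfl⟩ : v = 4 ∧ w = 3 ∧ x = 4 ∧ y = 3 ∧ z = 3 := by omega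
    exact ⟨[3, 3, 4, 3, 4], by decide, Or.inl (by decide)⟩
  · obtain ⟨rfl, rfl, rfl, rfl, rfl⟩ : v = 4 ∧ w = 4 ∧ x = 3 ∧ y = 3 ∧ z = 3 := by omega
    exact ⟨[3, 3, 3, 4, 4], by decide, Or.inl (by decide)⟩
  · obtain ⟨rfl, rfl, rfl, rfl, rfl⟩ : v = 6 ∧ w = 3 ∧ x = 3 ∧ y = 3 ∧ z = 3 := by omega
    exact ⟨[3, 3, 3, 3, 6], by decide, Or.inl (by decide)⟩

lemma core6 {u v w x y z : ℕ} (hu : 3 ≤ u) (hv : 3 ≤ v) (hw : 3 ≤ w) (hx : 3 ≤ x) (hy : 3 ≤ y) (hz : 3 ≤ z)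
    (hq : (1:ℚ)/u + 1/v + 1/w + 1/x + 1/y + 1/z = 2) :
    ∃ l' ∈ curvatureZeroFaceSequences, [u,v,w,x,y,z] ~r l' ∨ [u,v,w,x,y,z] ~r l'.reverse := by
  have h3u := inv_le_third hu
  have h3v := inv_le_third hv
  have h3w := inv_le_third hw
  have h3x := inv_le_third hx
  have h3y := inv_le_third hy
  have h3z := inv_le_third hz
  have hu3 : (u:ℚ) ≤ 3 := nat_le_of_inv hu (by norm_num) (by linarith)
  have hv3 : (v:ℚ) ≤ 3 := nat_le_of_inv hv (by norm_num) (by linarith)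
  have hw3 : (w:ℚ) ≤ 3 := nat_le_of_inv hw (by norm_num) (by linarith)
  have hx3 : (x:ℚ) ≤ 3 := nat_le_of_inv hx (by norm_num) (by linarith)
  have hy3 : (y:ℚ) ≤ 3 := nat_le_of_inv hy (by norm_num) (by linarith)
  have hz3 : (z:ℚ) ≤ 3 := nat_le_of_inv hz (by norm_num) (by linarith)
  have hu3' : u ≤ 3 := by exact_mod_cast hu3
  have hv3' : v ≤ 3 := by exact_mod_cast hv3
  have hw3' : w ≤ 3 := by exact_mod_cast hw3
  have hx3' : x ≤ 3 := by exact_mod_cast hx3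
  have hy3' : y ≤ 3 := by exact_mod_cast hy3
  have hz3' : z ≤ 3 := by exact_mod_cast hz3
  obtain ⟨rfl, rfl, rfl, rfl, rfl, rfl⟩ : u = 3 ∧ v = 3 ∧ w = 3 ∧ x = 3 ∧ y = 3 ∧ z = 3 := by omega
  exact ⟨[3,3,3,3,3,3], by decide, Or.inl (List.IsRotated.refl _)⟩

/-- Any nonempty list of naturals, each at least 3, with `∑ (1/2 − 1/p) = 1` (in ℚ)
is, up to cyclic rotation and reversal, one of the 21 listed face-sequences; and
conversely every listed face-sequence satisfies `∑ (1/2 − 1/p) = 1`. -/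
theorem curvature_zero_face_sequence_classification :
    (∀ l : List ℕ, l ≠ [] → (∀ p ∈ l, 3 ≤ p) →
      (l.map (fun p => (1 : ℚ) / 2 - 1 / (p : ℚ))).sum = 1 →
      ∃ l' ∈ curvatureZeroFaceSequences, l ~r l' ∨ l ~r l'.reverse) ∧
    (∀ l' ∈ curvatureZeroFaceSequences,
      (l'.map (fun p => (1 : ℚ) / 2 - 1 / (p : ℚ))).sum = 1) := by
  constructor
  · intro l hne hmem hsum0
    have hsum : (List.map (fun p : ℕ => (1:ℚ)/2 - 1/(p:ℚ)) l).sum = 1 := by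
      simpa only [bind_pure_comp, List.map_eq_map, List.map_map, Function.comp_def] using hsum0
    clear hsum0
    have hlen : l.length ≤ 6 := by
      have hterm : ∀ q ∈ List.map (fun p : ℕ => (1:ℚ)/2 - 1/(p:ℚ)) l, (1:ℚ)/6 ≤ q := by
        intro q hqm
        obtain ⟨p, hp, rfl⟩ := List.mem_map.mp hqm
        have h3 := inv_le_third (hmem p hp)
        linarith
      have hs := List.card_nsmul_le_sum _ _ hterm
      rw [hsum] at hs
      simp only [List.length_map, nsmul_eq_mul] at hs
      have h6 : (l.length : ℚ) ≤ 6 := by linarith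
      exact_mod_cast h6
    rcases l with _ | ⟨a, l⟩
    · exact absurd rfl hne
    rcases l with _ | ⟨b, l⟩
    · have ha := inv_pos3 (hmem a (by simp))
      simp only [List.map_cons, List.map_nil, List.sum_cons, List.sum_nil, add_zero] at hsum
      linarith
    rcases l with _ | ⟨c, l⟩
    · have ha := inv_pos3 (hmem a (by simp))
      have hb := inv_pos3 (hmem b (by simp))
      simp only [List.map_cons, List.map_nil, List.sum_cons, List.sum_nil, add_zero] at hsum
      linarith
    rcases l with _ | ⟨d, l⟩
    · simp only [List.map_cons, List.map_nil, List.sum_cons, List.sum_nil, add_zero] at hsum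
      exact core3Any (hmem a (by simp)) (hmem b (by simp)) (hmem c (by simp)) (by linarith)
    rcases l with _ | ⟨e, l⟩
    · simp only [List.map_cons, List.map_nil, List.sum_cons, List.sum_nil, add_zero] at hsum
      exact core4 (hmem a (by simp)) (hmem b (by simp)) (hmem c (by simp)) (hmem d (by simp)) (by linarith)
    rcases l with _ | ⟨f, l⟩
    · simp only [List.map_cons, List.map_nil, List.sum_cons, List.sum_nil, add_zero] at hsum
      exact core5 (hmem a (by simp)) (hmem b (by simp)) (hmem c (by simp)) (hmem d (by simp)) (hmem e (by simp)) (by linarith)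
    rcases l with _ | ⟨g, l⟩
    · simp only [List.map_cons, List.map_nil, List.sum_cons, List.sum_nil, add_zero] at hsum
      exact core6 (hmem a (by simp)) (hmem b (by simp)) (hmem c (by simp)) (hmem d (by simp)) (hmem e (by simp)) (hmem f (by simp)) (by linarith)
    · simp only [List.length_cons] at hlen
      omega
  · intro l' h'
    fin_cases h' <;> norm_num [List.sum_cons]
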